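/- Let n and C be positive integers with C ≤ n, let λ be a real number, and let x₁,…,xₙ ∈ [0,1] be real numbers. Define y₀ = 0, y_j = x₁ + ⋯ + x_j for 1 ≤ j ≤ n, and define x̄_j = 1 if ⌈y_{j−1}⌉ ≠ ⌈y_j⌉ and x̄_j = 0 otherwise. Then: (i) for every j with x_j = 1 we have x̄_j = 1; (ii) for every i with 1 ≤ i ≤ n−C+1 such that x_i + x_{i+1} + ⋯ + x_{i+C−1} ≥ 1, there exists k with i ≤ k ≤ i+C−1 and x̄_k = 1; (iii) for all 1 ≤ a ≤ b ≤ n such that x_a + x_{a+1} + ⋯ + x_b ≤ λ − 1, the number of indices j with a ≤ j ≤ b and x̄_j = 1 is at most ⌈λ⌉ − 1. In particular, every feasible fractional solution of the LP relaxation of the block-partition integer program can be rounded to a feasible integer solution with objective value at most ⌈λ⌉. -/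

import Mathlib

/-- Telescoping bound: the number of indices in `[a,b]` where an (locally monotone)
integer sequence changes is at most `f b - f (a-1)`. -/
private lemma lp_tele_card (f : ℕ → ℤ) (a : ℕ) (ha : 1 ≤ a) :
    ∀ b, a ≤ b → (∀ j ∈ Finset.Icc a b, f (j - 1) ≤ f j) →
    (((Finset.Icc a b).filter fun j => f (j - 1) ≠ f j).card : ℤ) ≤ f b - f (a - 1) := by
  intro b hab
  induction b, hab using Nat.le_induction with
  | base =>
    intro hm
    rw [Finset.Icc_self]
    by_cases h : f (a - 1) = f a
    · simp [Finset.filter_singleton, h]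
    · have := hm a (by simp)
      simp [Finset.filter_singleton, h]
      omega
  | succ b hb ih =>
    intro hm
    have hm' : ∀ j ∈ Finset.Icc a b, f (j - 1) ≤ f j := by
      intro j hj
      simp only [Finset.mem_Icc] at hj
      exact hm j (Finset.mem_Icc.mpr ⟨hj.1, hj.2.trans (Nat.le_succ b)⟩)
    have hstep : f b ≤ f (b + 1) := by
      have := hm (b + 1) (Finset.mem_Icc.mpr ⟨by omega, le_refl _⟩)
      simpa using this
    have ihb := ih hm'
    rw [← Finset.insert_Icc_right_eq_Icc_add_one (by omega : a ≤ b + 1), Finset.filter_insert]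
    by_cases h : f (b + 1 - 1) ≠ f (b + 1)
    · rw [if_pos h, Finset.card_insert_of_notMem (by
        intro hmem
        exact absurd (Finset.mem_Icc.mp (Finset.mem_of_mem_filter _ hmem)).2 (by omega))]
      push_cast
      simp only [Nat.add_sub_cancel] at h
      omega
    · rw [if_neg h]
      simp only [Nat.add_sub_cancel, not_not] at h
      omega

/-- If the sequence never changes along `[a,b]` then `f (a-1) = f b`. -/
private lemma lp_const (f : ℕ → ℤ) (a : ℕ) (ha : 1 ≤ a) :
    ∀ b, a ≤ b → (∀ j ∈ Finset.Icc a b, f (j - 1) = f j) → f (a - 1) = f b := by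
  intro b hab
  induction b, hab using Nat.le_induction with
  | base =>
    intro hm
    have := hm a (by simp)
    simpa using this
  | succ b hb ih =>
    intro hm
    have h1 : f (a - 1) = f b := ih (fun j hj => by
      simp only [Finset.mem_Icc] at hj
      exact hm j (Finset.mem_Icc.mpr ⟨hj.1, hj.2.trans (Nat.le_succ b)⟩))
    have h2 := hm (b + 1) (Finset.mem_Icc.mpr ⟨by omega, le_refl _⟩)
    simp only [Nat.add_sub_cancel] at h2
    omega

private lemma lp_sum_split (x : ℕ → ℝ) (a b : ℕ) (ha : 1 ≤ a) (hab : a ≤ b) :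
    ∑ j ∈ Finset.Icc a b, x j
      = (∑ i ∈ Finset.Icc 1 b, x i) - ∑ i ∈ Finset.Icc 1 (a - 1), x i := by
  have h1 : Finset.Icc a b = Finset.Ioc (a - 1) b := by
    rw [← Finset.Icc_add_one_left_eq_Ioc]; congr 1; omega
  have h2 : ∀ m : ℕ, Finset.Icc 1 m = Finset.Ioc 0 m := fun m => by
    rw [← Finset.Icc_add_one_left_eq_Ioc, Nat.zero_add]
  rw [h1, h2, h2]
  have := Finset.sum_Ioc_consecutive x (Nat.zero_le (a - 1)) (by omega : a - 1 ≤ b)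
  linarith

theorem lp_rounding (n C : ℕ) (hn : 0 < n) (hC : 0 < C) (hCn : C ≤ n)
    (lam : ℝ) (x : ℕ → ℝ) (hx : ∀ j ∈ Finset.Icc 1 n, x j ∈ Set.Icc (0 : ℝ) 1) :
    let y : ℕ → ℝ := fun j => ∑ i ∈ Finset.Icc 1 j, x i
    let xbar : ℕ → ℕ := fun j => if ⌈y (j - 1)⌉ ≠ ⌈y j⌉ then 1 else 0
    (∀ j ∈ Finset.Icc 1 n, x j = 1 → xbar j = 1) ∧
    (∀ i : ℕ, 1 ≤ i → i ≤ n - C + 1 →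
      1 ≤ ∑ j ∈ Finset.Icc i (i + C - 1), x j →
      ∃ k ∈ Finset.Icc i (i + C - 1), xbar k = 1) ∧
    (∀ a b : ℕ, 1 ≤ a → a ≤ b → b ≤ n →
      (∑ j ∈ Finset.Icc a b, x j) ≤ lam - 1 →
      (((Finset.Icc a b).filter fun j => xbar j = 1).card : ℤ) ≤ ⌈lam⌉ - 1) := by
  intro y xbar
  -- basic facts
  have hdiff : ∀ j : ℕ, 1 ≤ j → x j = y j - y (j - 1) := by
    intro j hj
    have := lp_sum_split x j j hj le_rfl
    simpa using this
  have hmono : ∀ j ∈ Finset.Icc 1 n, (⌈y (j - 1)⌉ : ℤ) ≤ ⌈y j⌉ := by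
    intro j hj
    apply Int.ceil_le_ceil
    have hx0 := (hx j hj).1
    have hd := hdiff j (Finset.mem_Icc.mp hj).1
    linarith
  refine ⟨?_, ?_, ?_⟩
  · -- (i)
    intro j hj hxj
    have hd := hdiff j (Finset.mem_Icc.mp hj).1
    have hy : y j = y (j - 1) + 1 := by linarith
    have : ⌈y j⌉ = ⌈y (j - 1)⌉ + 1 := by rw [hy, Int.ceil_add_one]
    simp only [xbar, if_pos (by omega : ⌈y (j-1)⌉ ≠ ⌈y j⌉)]
  · -- (ii)
    intro i hi hin hsum
    by_contra hcon
    push_neg at hcon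
    have hall : ∀ k ∈ Finset.Icc i (i + C - 1), (⌈y (k - 1)⌉ : ℤ) = ⌈y k⌉ := by
      intro k hk
      by_contra hne
      exact hcon k hk (by simp [xbar, hne])
    have hconst := lp_const (fun j => ⌈y j⌉) i hi (i + C - 1) (by omega) hall
    have hs : ∑ j ∈ Finset.Icc i (i + C - 1), x j = y (i + C - 1) - y (i - 1) :=
      lp_sum_split x i (i + C - 1) hi (by omega)
    have h1 : y (i - 1) + 1 ≤ y (i + C - 1) := by rw [hs] at hsum; linarith
    have h2 : (⌈y (i - 1)⌉ : ℤ) + 1 ≤ ⌈y (i + C - 1)⌉ := by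
      calc (⌈y (i - 1)⌉ : ℤ) + 1 = ⌈y (i - 1) + 1⌉ := (Int.ceil_add_one _).symm
        _ ≤ ⌈y (i + C - 1)⌉ := Int.ceil_le_ceil h1
    omega
  · -- (iii)
    intro a b ha hab hbn hsum
    have hfilter : ((Finset.Icc a b).filter fun j => xbar j = 1)
        = (Finset.Icc a b).filter fun j => (⌈y (j - 1)⌉ : ℤ) ≠ ⌈y j⌉ := by
      apply Finset.filter_congr
      intro j hj
      simp only [xbar]
      by_cases h : (⌈y (j - 1)⌉ : ℤ) ≠ ⌈y j⌉ <;> simp [h]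
    rw [hfilter]
    have hm : ∀ j ∈ Finset.Icc a b, (⌈y (j - 1)⌉ : ℤ) ≤ ⌈y j⌉ := by
      intro j hj
      simp only [Finset.mem_Icc] at hj
      exact hmono j (Finset.mem_Icc.mpr ⟨by omega, by omega⟩)
    have htele := lp_tele_card (fun j => ⌈y j⌉) a ha b hab hm
    have hs : ∑ j ∈ Finset.Icc a b, x j = y b - y (a - 1) :=
      lp_sum_split x a b ha hab
    have h1 : y b ≤ y (a - 1) + (lam - 1) := by rw [hs] at hsum; linarith
    have h2 : (⌈y b⌉ : ℤ) ≤ ⌈y (a - 1)⌉ + (⌈lam⌉ - 1) := by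
      calc (⌈y b⌉ : ℤ) ≤ ⌈y (a - 1) + (lam - 1)⌉ := Int.ceil_le_ceil h1
        _ ≤ ⌈y (a - 1)⌉ + ⌈lam - 1⌉ := Int.ceil_add_le _ _
        _ = ⌈y (a - 1)⌉ + (⌈lam⌉ - 1) := by rw [Int.ceil_sub_one]
    omega
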